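/- There exist an integer N ≥ 3, a labeling y : Fin N → Fin 3 using three distinct classes, a simple graph G on vertex set Fin N, and real symmetric N×N matrices A₁ and A₂ with zero diagonal whose supports are contained in the edge set of G (i.e., for each k, (A_k)_{ij} ≠ 0 only if {i,j} is an edge of G), such that both A₁ and A₂ are desirable with respect to y, but the product A₂ · A₁ is not desirable with respect to y. -/

import Mathlib

/-- A real `N × N` matrix `M` is *desirable* with respect to a labeling `y` if
`M i j ≥ 0` whenever `y i = y j` and `M i j ≤ 0` whenever `y i ≠ y j`. -/
def Desirable {N C : ℕ} (y : Fin N → Fin C) (M : Matrix (Fin N) (Fin N) ℝ) : Prop :=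
  ∀ i j, (y i = y j → 0 ≤ M i j) ∧ (y i ≠ y j → M i j ≤ 0)

theorem stmt_0 :
    ∃ (N : ℕ), 3 ≤ N ∧
    ∃ (y : Fin N → Fin 3) (G : SimpleGraph (Fin N))
      (A₁ A₂ : Matrix (Fin N) (Fin N) ℝ),
      Function.Surjective y ∧
      A₁.IsSymm ∧ A₂.IsSymm ∧
      (∀ i, A₁ i i = 0) ∧ (∀ i, A₂ i i = 0) ∧
      (∀ i j, A₁ i j ≠ 0 → G.Adj i j) ∧
      (∀ i j, A₂ i j ≠ 0 → G.Adj i j) ∧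
      Desirable y A₁ ∧ Desirable y A₂ ∧ ¬ Desirable y (A₂ * A₁) := by
  refine ⟨3, le_refl 3, id, ⊤,
    (fun i j => if i = j then 0 else -1),
    (fun i j => if i = j then 0 else -1), ?_, ?_, ?_, ?_, ?_, ?_, ?_, ?_, ?_, ?_⟩
  · exact Function.surjective_id
  · ext i j
    show (if j = i then (0:ℝ) else -1) = if i = j then 0 else -1
    by_cases h : i = j <;> simp [h, eq_comm]
  · ext i j
    show (if j = i then (0:ℝ) else -1) = if i = j then 0 else -1
    by_cases h : i = j <;> simp [h, eq_comm]
  · intro i; simp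
  · intro i; simp
  · intro i j h
    simp only [ne_eq, ite_eq_left_iff] at h
    by_cases hij : i = j
    · simp [hij] at h
    · exact hij
  · intro i j h
    simp only [ne_eq, ite_eq_left_iff] at h
    by_cases hij : i = j
    · simp [hij] at h
    · exact hij
  · intro i j
    constructor
    · intro h; simp only [id] at h; simp [h]
    · intro h
      by_cases hij : i = j <;> simp [hij]
  · intro i j
    constructor
    · intro h; simp only [id] at h; simp [h]
    · intro h
      by_cases hij : i = j <;> simp [hij]
  · intro hdes
    have h := (hdes 0 1).2 (by decide)
    change ∑ k : Fin 3, (if (0:Fin 3) = k then (0:ℝ) else -1) * (if k = 1 then 0 else -1) ≤ 0 at h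
    simp [Fin.sum_univ_three] at h
    linarith
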